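/- Let q be a prime power, F the finite field with q² elements, and c₀, c₁ ∈ F. The polynomial X^{q+1} + c₁·X + c₀ has exactly q+1 distinct roots in F if and only if c₁ = 0, c₀ ≠ 0, and c₀^q = c₀ (i.e. c₀ lies in the subfield with q elements and is nonzero). -/

import Mathlib

open Polynomial Finset

lemma aux_count (q : ℕ) (hq2 : 2 ≤ q) (F : Type*) [Field F] [Fintype F] [DecidableEq F]
    (hF : Fintype.card F = q ^ 2) (b : F) (hb : b ≠ 0) (hbq : b ^ q = b) :
    (Finset.univ.filter fun x : F => x ^ (q + 1) = b).card = q + 1 := by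
  have hq1 : 1 < q ^ 2 := by nlinarith
  set P : F[X] := X ^ (q + 1) - C b with hP
  have hPdeg : P.natDegree = q + 1 := natDegree_X_pow_sub_C
  have hP0 : P ≠ 0 := by
    intro h; rw [h] at hPdeg; simp at hPdeg
  have hb1 : b ^ (q - 1) = 1 := by
    have h : b ^ (q - 1) * b = 1 * b := by
      rw [one_mul, ← pow_succ]
      have e : q - 1 + 1 = q := by omega
      rw [e, hbq]
    exact mul_right_cancel₀ hb h
  have hdvd1 : (X - C b) ∣ (X ^ (q - 1) - 1 : F[X]) := by
    rw [dvd_iff_isRoot]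
    simp [IsRoot, hb1]
  obtain ⟨D, hD⟩ := hdvd1
  have hcomp := congrArg (·.comp (X ^ (q + 1) : F[X])) hD
  simp only [sub_comp, mul_comp, X_pow_comp, X_comp, one_comp, pow_comp, C_comp] at hcomp
  have hexp : (q + 1) * (q - 1) = q ^ 2 - 1 := by
    have h := Nat.sq_sub_sq q 1
    simpa using h.symm
  have hdvd : P ∣ (X ^ (q ^ 2) - X : F[X]) := by
    refine ⟨X * D.comp (X ^ (q + 1)), ?_⟩
    have h1 : (X ^ (q ^ 2) - X : F[X]) = X * (X ^ (q ^ 2 - 1) - 1) := by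
      rw [mul_sub, mul_one, ← pow_succ']
      have e : q ^ 2 - 1 + 1 = q ^ 2 := by omega
      rw [e]
    rw [h1, ← hexp, pow_mul, hcomp]
    ring
  have hBne : (X ^ (q ^ 2) - X : F[X]) ≠ 0 := FiniteField.X_pow_card_sub_X_ne_zero F hq1
  have hroots_big : (X ^ (q ^ 2) - X : F[X]).roots = Finset.univ.val := by
    rw [← hF]; exact FiniteField.roots_X_pow_card_sub_X F
  have hsplits_big : Splits (X ^ (q ^ 2) - X : F[X]) := by
    rw [splits_iff_card_roots, hroots_big, FiniteField.X_pow_card_sub_X_natDegree_eq F hq1]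
    simpa using hF
  have hsplitsP : Splits P :=
    hsplits_big.of_dvd hBne hdvd
  have hcard : P.roots.card = q + 1 := by
    rw [← hPdeg]; exact splits_iff_card_roots.mp hsplitsP
  have hle : P.roots ≤ (X ^ (q ^ 2) - X : F[X]).roots := Polynomial.roots.le_of_dvd hBne hdvd
  have hnodup : P.roots.Nodup := Multiset.nodup_of_le (hroots_big ▸ hle) Finset.univ.nodup
  have hfilter : (Finset.univ.filter fun x : F => x ^ (q + 1) = b) = P.roots.toFinset := by
    ext x
    simp [mem_roots, hP0, hP, sub_eq_zero]
    exact fun _ => by simpa [hP, sub_eq_zero] using hP0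
  rw [hfilter, Multiset.toFinset_card_of_nodup hnodup, hcard]

/-- Let `q` be a prime power and `F` the field with `q²` elements,
`c₀, c₁ ∈ F`. The polynomial `X^{q+1} + c₁·X + c₀` has exactly `q + 1` distinct roots in `F`
if and only if `c₁ = 0`, `c₀ ≠ 0` and `c₀^q = c₀` (i.e. `c₀ ∈ 𝔽_q \ {0}`). -/
theorem stmt_9 (q : ℕ) (hq : IsPrimePow q)
    (F : Type*) [Field F] [Fintype F] [DecidableEq F] (hF : Fintype.card F = q ^ 2)
    (c₀ c₁ : F) :
    (Finset.univ.filter fun x : F => x ^ (q + 1) + c₁ * x + c₀ = 0).card = q + 1 ↔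
      c₁ = 0 ∧ c₀ ≠ 0 ∧ c₀ ^ q = c₀ := by
  have hq2 : 2 ≤ q := hq.two_le
  obtain ⟨p, k, hp, hk, hpk⟩ := hq
  have hpp : p.Prime := Nat.prime_iff.mpr hp
  haveI : Fact p.Prime := ⟨hpp⟩
  haveI : CharP F (ringChar F) := ringChar.charP F
  obtain ⟨n, hrp, hcard⟩ := FiniteField.card F (ringChar F)
  have hpr : p = ringChar F := by
    have h1 : p ^ (2 * k) = ringChar F ^ (n : ℕ) := by
      rw [mul_comm, pow_mul, hpk, ← hF, hcard]
    have hdvd : p ∣ ringChar F ^ (n : ℕ) := h1 ▸ dvd_pow_self p (by omega : 2 * k ≠ 0)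
    exact (Nat.prime_dvd_prime_iff_eq hpp hrp).mp (hpp.dvd_of_dvd_pow hdvd)
  haveI hcharp : CharP F p := hpr ▸ ringChar.charP F
  haveI : ExpChar F p := ExpChar.prime hpp
  have hφ : ∀ y : F, (iterateFrobenius F p k) y = y ^ q := fun y => by
    rw [iterateFrobenius_def, hpk]
  have hneg : ∀ y : F, (-y) ^ q = -(y ^ q) := by
    intro y
    have h := map_neg (iterateFrobenius F p k) y
    rwa [hφ, hφ] at h
  have hxq2 : ∀ x : F, x ^ q ^ 2 = x := fun x => by
    rw [← hF]; exact FiniteField.pow_card x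
  constructor
  · intro hcardf
    have hc₁ : c₁ = 0 := by
      by_contra hc₁
      have key : ∀ x : F, x ^ (q + 1) + c₁ * x + c₀ = 0 →
          c₁ * x ^ 2 + (c₁ ^ (q + 1) + c₀ - c₀ ^ q) * x + c₀ * c₁ ^ q = 0 := by
        intro x hx
        have h1 : x ^ q ^ 2 = x := hxq2 x
        have h2' : (x ^ q) ^ (q + 1) + c₁ ^ q * x ^ q + c₀ ^ q = 0 := by
          have h := congrArg (iterateFrobenius F p k) hx
          simp only [map_add, map_mul, map_pow, map_zero] at h
          simpa [hφ] using h
        have h4 : x ^ (q + 1) = (x ^ q) ^ (q + 1) := by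
          have e : (x ^ q) ^ (q + 1) = x ^ q ^ 2 * x ^ q := by
            rw [← pow_mul, ← pow_add]; congr 1; ring
          rw [e, h1]; ring
        have h5 : x ^ (q + 1) + c₁ ^ q * x ^ q + c₀ ^ q = 0 := by rw [h4]; exact h2'
        linear_combination x * hx + c₁ ^ q * hx - x * h5
      have h3 : 2 < (Finset.univ.filter fun x : F => x ^ (q + 1) + c₁ * x + c₀ = 0).card := by
        rw [hcardf]; omega
      obtain ⟨a, b, c, ha, hb, hc, hab, hac, hbc⟩ := Finset.two_lt_card_iff.mp h3
      simp only [Finset.mem_filter] at ha hb hc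
      have ka := key a ha.2
      have kb := key b hb.2
      have kc := key c hc.2
      have hab' : (a - b) * (c₁ * (a + b) + (c₁ ^ (q + 1) + c₀ - c₀ ^ q)) = 0 := by
        linear_combination ka - kb
      have hac' : (a - c) * (c₁ * (a + c) + (c₁ ^ (q + 1) + c₀ - c₀ ^ q)) = 0 := by
        linear_combination ka - kc
      have e1 : c₁ * (a + b) + (c₁ ^ (q + 1) + c₀ - c₀ ^ q) = 0 :=
        (mul_eq_zero.mp hab').resolve_left (sub_ne_zero.mpr hab)
      have e2 : c₁ * (a + c) + (c₁ ^ (q + 1) + c₀ - c₀ ^ q) = 0 :=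
        (mul_eq_zero.mp hac').resolve_left (sub_ne_zero.mpr hac)
      have e3 : c₁ * (b - c) = 0 := by linear_combination e1 - e2
      rcases mul_eq_zero.mp e3 with h | h
      · exact hc₁ h
      · exact hbc (sub_eq_zero.mp h)
    subst hc₁
    have hc₀ : c₀ ≠ 0 := by
      intro h
      subst h
      have : (Finset.univ.filter fun x : F => x ^ (q + 1) + 0 * x + 0 = 0) = {0} := by
        ext x
        simp [pow_eq_zero_iff (by omega : q + 1 ≠ 0)]
      rw [this] at hcardf
      simp at hcardf
      omega
    refine ⟨rfl, hc₀, ?_⟩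
    have hne : (Finset.univ.filter fun x : F => x ^ (q + 1) + 0 * x + c₀ = 0).Nonempty := by
      rw [← Finset.card_pos, hcardf]; omega
    obtain ⟨x, hx⟩ := hne
    simp only [Finset.mem_filter] at hx
    have hx' : x ^ (q + 1) = -c₀ := by linear_combination hx.2
    have h1 : (-c₀) ^ q = -c₀ := by
      calc (-c₀) ^ q = (x ^ (q + 1)) ^ q := by rw [hx']
        _ = x ^ ((q + 1) * q) := by rw [← pow_mul]
        _ = x ^ q ^ 2 * x ^ q := by rw [← pow_add]; congr 1; ring
        _ = x * x ^ q := by rw [hxq2]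
        _ = x ^ (q + 1) := by ring
        _ = -c₀ := hx'
    rw [hneg] at h1
    exact neg_inj.mp h1
  · rintro ⟨rfl, hc₀, hc₀q⟩
    have hb : (-c₀ : F) ≠ 0 := neg_ne_zero.mpr hc₀
    have hbq : (-c₀ : F) ^ q = -c₀ := by rw [hneg, hc₀q]
    have h := aux_count q hq2 F hF (-c₀) hb hbq
    have e : (Finset.univ.filter fun x : F => x ^ (q + 1) + 0 * x + c₀ = 0) =
        (Finset.univ.filter fun x : F => x ^ (q + 1) = -c₀) := by
      ext x
      simp [add_eq_zero_iff_eq_neg]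
    rw [e]
    exact h
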